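/- Let H(t) be a smooth family of Hermitian operators on a finite-dimensional Hilbert space depending on parameters φ₁, φ₂ through the combinations ω₁t+φ₁ and ω₂t+φ₂ (i.e., ∂_{φⱼ} H = (1/ωⱼ) ∂_t H_j where H_j is the j-th drive term). Then the power operators satisfy energy conservation: ω₁P₁ + ω₂P₂ = 0, where Pⱼ = lim_{T→∞} (i/T) U(T)† ∂_{φⱼ} U(T). Equivalently, for each quasienergy εₙ(φ₁,φ₂), (ω₁∂_{φ₁} + ω₂∂_{φ₂}) εₙ = 0. -/

import Mathlib

open Matrix Filter Topology

attribute [local instance] Matrix.normedAddCommGroup Matrix.normedSpace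

section Aux

variable {d : ℕ}

private lemma hasDerivAt_entry {f : ℝ → Matrix (Fin d) (Fin d) ℂ} {f' : Matrix (Fin d) (Fin d) ℂ}
    {x : ℝ} (h : HasDerivAt f f' x) (i j : Fin d) :
    HasDerivAt (fun t => f t i j) (f' i j) x :=
  hasDerivAt_pi.1 (hasDerivAt_pi.1 h i) j

private lemma hasDerivAt_of_entries {f : ℝ → Matrix (Fin d) (Fin d) ℂ}
    {f' : Matrix (Fin d) (Fin d) ℂ} {x : ℝ}
    (h : ∀ i j, HasDerivAt (fun t => f t i j) (f' i j) x) : HasDerivAt f f' x :=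
  hasDerivAt_pi.2 fun i => hasDerivAt_pi.2 fun j => h i j

private lemma hasDerivAt_matmul {f g : ℝ → Matrix (Fin d) (Fin d) ℂ}
    {f' g' : Matrix (Fin d) (Fin d) ℂ} {x : ℝ}
    (hf : HasDerivAt f f' x) (hg : HasDerivAt g g' x) :
    HasDerivAt (fun t => f t * g t) (f' * g x + f x * g') x := by
  apply hasDerivAt_of_entries
  intro i j
  have h1 : ∀ t, (f t * g t) i j = ∑ k, f t i k * g t k j := fun t => rfl
  simp only [h1]
  have h2 : HasDerivAt (fun t => ∑ k, f t i k * g t k j)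
      (∑ k, (f' i k * g x k j + f x i k * g' k j)) x :=
    HasDerivAt.fun_sum fun k _ => (hasDerivAt_entry hf i k).mul (hasDerivAt_entry hg k j)
  convert h2 using 1
  simp [Matrix.add_apply, Matrix.mul_apply, Finset.sum_add_distrib]

private lemma hasDerivAt_conjTranspose {f : ℝ → Matrix (Fin d) (Fin d) ℂ}
    {f' : Matrix (Fin d) (Fin d) ℂ} {x : ℝ} (hf : HasDerivAt f f' x) :
    HasDerivAt (fun t => (f t)ᴴ) f'ᴴ x := by
  apply hasDerivAt_of_entries
  intro i j
  exact (hasDerivAt_entry hf j i).star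

private lemma norm_matmul_le (A B : Matrix (Fin d) (Fin d) ℂ) :
    ‖A * B‖ ≤ d * ‖A‖ * ‖B‖ := by
  have h0 : (0:ℝ) ≤ d * ‖A‖ * ‖B‖ := by positivity
  refine (Matrix.norm_le_iff h0).2 fun i j => ?_
  calc ‖(A * B) i j‖ = ‖∑ k, A i k * B k j‖ := rfl
    _ ≤ ∑ k, ‖A i k * B k j‖ := norm_sum_le _ _
    _ ≤ ∑ k : Fin d, ‖A‖ * ‖B‖ := by
        refine Finset.sum_le_sum fun k _ => ?_
        rw [norm_mul]
        exact mul_le_mul (Matrix.norm_entry_le_entrywise_sup_norm A)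
          (Matrix.norm_entry_le_entrywise_sup_norm B) (norm_nonneg _) (norm_nonneg _)
    _ = d * ‖A‖ * ‖B‖ := by simp [mul_assoc]

private lemma norm_le_one_of_unitary {A : Matrix (Fin d) (Fin d) ℂ} (h : Aᴴ * A = 1) :
    ‖A‖ ≤ 1 := by
  refine (Matrix.norm_le_iff zero_le_one).2 fun i j => ?_
  have h1 : ((Aᴴ * A) j j) = 1 := by rw [h]; simp [Matrix.one_apply]
  have h2 : (↑(∑ k, Complex.normSq (A k j)) : ℂ) = 1 := by
    rw [← h1]
    simp only [Matrix.mul_apply, Matrix.conjTranspose_apply, Complex.ofReal_sum]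
    congr 1; ext k
    rw [show star (A k j) = (starRingEnd ℂ) (A k j) from rfl, mul_comm, Complex.mul_conj]
  have h3 : ∑ k, Complex.normSq (A k j) = 1 := by exact_mod_cast h2
  have h4 : Complex.normSq (A i j) ≤ 1 := by
    rw [← h3]
    exact Finset.single_le_sum (f := fun k => Complex.normSq (A k j))
      (fun k _ => Complex.normSq_nonneg _) (Finset.mem_univ i)
  have h5 : ‖A i j‖ ^ 2 ≤ 1 := by
    rwa [Complex.normSq_eq_norm_sq] at h4
  nlinarith [norm_nonneg (A i j)]

private lemma bounded_of_periodic {f : ℝ → Matrix (Fin d) (Fin d) ℂ}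
    (hper : Function.Periodic f (2 * Real.pi)) (hc : Continuous f) :
    ∃ C : ℝ, 0 ≤ C ∧ ∀ x, ‖f x‖ ≤ C := by
  obtain ⟨C, hC⟩ := (isCompact_Icc (a := (0:ℝ)) (b := 2 * Real.pi)).exists_bound_of_continuousOn
    hc.continuousOn
  refine ⟨max C 0, le_max_right _ _, fun x => ?_⟩
  obtain ⟨y, hy, hxy⟩ := hper.exists_mem_Ico₀ (by positivity) x
  rw [hxy]
  exact le_trans (hC y (Set.mem_Icc_of_Ico hy)) (le_max_left _ _)

private lemma real_coe_smul (r : ℝ) (X : Matrix (Fin d) (Fin d) ℂ) :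
    (r : ℂ) • X = r • X := by
  ext i j
  simp [Matrix.smul_apply, Complex.real_smul]

end Aux

set_option maxHeartbeats 1600000 in
theorem stmt3 (d : ℕ) (ω₁ ω₂ : ℝ) (hω₁ : 0 < ω₁) (hω₂ : 0 < ω₂)
    (H₀ : Matrix (Fin d) (Fin d) ℂ) (H₁ H₂ : ℝ → Matrix (Fin d) (Fin d) ℂ)
    (hH₁per : Function.Periodic H₁ (2 * Real.pi))
    (hH₂per : Function.Periodic H₂ (2 * Real.pi))
    (hH₁cont : Continuous H₁) (hH₂cont : Continuous H₂)
    (hH₁herm : ∀ x, (H₁ x).IsHermitian) (hH₂herm : ∀ x, (H₂ x).IsHermitian)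
    (hH₀herm : H₀.IsHermitian)
    (U D₁ D₂ : ℝ → ℝ → ℝ → Matrix (Fin d) (Fin d) ℂ)
    (hU0 : ∀ φ₁ φ₂ : ℝ, U 0 φ₁ φ₂ = 1)
    (hSchr : ∀ T φ₁ φ₂ : ℝ, HasDerivAt (fun t => U t φ₁ φ₂)
      ((-Complex.I) • ((H₀ + H₁ (ω₁ * T + φ₁) + H₂ (ω₂ * T + φ₂)) * U T φ₁ φ₂)) T)
    (hD₁ : ∀ T φ₁ φ₂ : ℝ, HasDerivAt (fun x => U T x φ₂) (D₁ T φ₁ φ₂) φ₁)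
    (hD₂ : ∀ T φ₁ φ₂ : ℝ, HasDerivAt (fun y => U T φ₁ y) (D₂ T φ₁ φ₂) φ₂)
    (φ₁ φ₂ : ℝ) (P₁ P₂ : Matrix (Fin d) (Fin d) ℂ)
    (hP₁ : Tendsto (fun T : ℝ => (Complex.I / (T : ℂ)) • ((U T φ₁ φ₂)ᴴ * D₁ T φ₁ φ₂))
      atTop (𝓝 P₁))
    (hP₂ : Tendsto (fun T : ℝ => (Complex.I / (T : ℂ)) • ((U T φ₁ φ₂)ᴴ * D₂ T φ₁ φ₂))
      atTop (𝓝 P₂)) :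
    (ω₁ : ℂ) • P₁ + (ω₂ : ℂ) • P₂ = 0 := by
  -- Hamiltonian as a function
  set Ham : ℝ → ℝ → ℝ → Matrix (Fin d) (Fin d) ℂ :=
    fun t x y => H₀ + H₁ (ω₁ * t + x) + H₂ (ω₂ * t + y) with hHamdef
  have hSchrH : ∀ T x y : ℝ, HasDerivAt (fun t => U t x y)
      ((-Complex.I) • (Ham T x y * U T x y)) T := hSchr
  have hHamherm : ∀ t x y, (Ham t x y).IsHermitian :=
    fun t x y => ((hH₀herm.add (hH₁herm _)).add (hH₂herm _))
  obtain ⟨C₁, hC₁0, hC₁⟩ := bounded_of_periodic hH₁per hH₁cont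
  obtain ⟨C₂, hC₂0, hC₂⟩ := bounded_of_periodic hH₂per hH₂cont
  set CH : ℝ := ‖H₀‖ + C₁ + C₂ with hCHdef
  have hCH0 : 0 ≤ CH := by positivity
  have hHamnorm : ∀ t x y, ‖Ham t x y‖ ≤ CH := by
    intro t x y
    calc ‖Ham t x y‖ ≤ ‖H₀ + H₁ (ω₁ * t + x)‖ + ‖H₂ (ω₂ * t + y)‖ := norm_add_le _ _
      _ ≤ (‖H₀‖ + ‖H₁ (ω₁ * t + x)‖) + ‖H₂ (ω₂ * t + y)‖ :=
          add_le_add_left (norm_add_le _ _) _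
      _ ≤ CH := by
          have := hC₁ (ω₁ * t + x); have := hC₂ (ω₂ * t + y)
          rw [hCHdef]; linarith
  -- unitarity of U
  have hUderiv0 : ∀ x y : ℝ, ∀ t : ℝ,
      HasDerivAt (fun t => (U t x y)ᴴ * U t x y) 0 t := by
    intro x y t
    have h := hSchrH t x y
    have h2 := hasDerivAt_matmul (hasDerivAt_conjTranspose h) h
    convert h2 using 1
    rw [Matrix.conjTranspose_smul, Matrix.conjTranspose_mul, (hHamherm t x y).eq]
    rw [Matrix.smul_mul, Matrix.mul_smul, mul_assoc]
    rw [← add_smul]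
    simp
  have hUunit : ∀ t x y : ℝ, (U t x y)ᴴ * U t x y = 1 := by
    intro t x y
    have hdiff : Differentiable ℝ (fun t => (U t x y)ᴴ * U t x y) :=
      fun s => (hUderiv0 x y s).differentiableAt
    have hconst := is_const_of_deriv_eq_zero hdiff (fun s => (hUderiv0 x y s).deriv) t 0
    rw [hconst, hU0]
    simp
  have hUunit' : ∀ t x y : ℝ, U t x y * (U t x y)ᴴ = 1 :=
    fun t x y => mul_eq_one_comm.mp (hUunit t x y)
  have hUnorm : ∀ t x y : ℝ, ‖U t x y‖ ≤ 1 :=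
    fun t x y => norm_le_one_of_unitary (hUunit t x y)
  have hUHnorm : ∀ t x y : ℝ, ‖(U t x y)ᴴ‖ ≤ 1 := by
    intro t x y
    refine norm_le_one_of_unitary ?_
    rw [conjTranspose_conjTranspose]
    exact hUunit' t x y
  -- shifted Schrodinger equation
  have hSchr' : ∀ (a x y t : ℝ), HasDerivAt (fun t => U (a + t) x y)
      ((-Complex.I) • (Ham (a + t) x y * U (a + t) x y)) t := by
    intro a x y t
    have h := HasDerivAt.scomp (𝕜 := ℝ) t (hSchrH (a + t) x y)
      ((hasDerivAt_id t).const_add a)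
    simp only [Function.comp_def, one_smul] at h
    exact h
  -- the time-shift identity
  have hshift : ∀ (x y s t : ℝ),
      U t (x + ω₁ * s) (y + ω₂ * s) = U (s + t) x y * (U s x y)ᴴ := by
    intro x y s t
    have harg : ∀ t : ℝ, Ham (s + t) x y = Ham t (x + ω₁ * s) (y + ω₂ * s) := by
      intro t
      have e1 : ω₁ * (s + t) + x = ω₁ * t + (x + ω₁ * s) := by ring
      have e2 : ω₂ * (s + t) + y = ω₂ * t + (y + ω₂ * s) := by ring
      simp only [hHamdef, e1, e2]
    have hE0 : ∀ t : ℝ, HasDerivAt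
        (fun t => (U (s + t) x y)ᴴ * U t (x + ω₁ * s) (y + ω₂ * s)) 0 t := by
      intro t
      have h1 := hasDerivAt_conjTranspose (hSchr' s x y t)
      have h2 := hSchrH t (x + ω₁ * s) (y + ω₂ * s)
      have h3 := hasDerivAt_matmul h1 h2
      convert h3 using 1
      rw [Matrix.conjTranspose_smul, Matrix.conjTranspose_mul, (hHamherm (s + t) x y).eq]
      rw [harg t, Matrix.smul_mul, Matrix.mul_smul, mul_assoc]
      rw [← add_smul]
      simp
    have hdiff : Differentiable ℝ
        (fun t => (U (s + t) x y)ᴴ * U t (x + ω₁ * s) (y + ω₂ * s)) :=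
      fun u => (hE0 u).differentiableAt
    have hconst := is_const_of_deriv_eq_zero hdiff (fun u => (hE0 u).deriv) t 0
    have hE : (U (s + t) x y)ᴴ * U t (x + ω₁ * s) (y + ω₂ * s) = (U s x y)ᴴ := by
      rw [hconst, hU0]
      simp
    calc U t (x + ω₁ * s) (y + ω₂ * s)
        = (U (s + t) x y * (U (s + t) x y)ᴴ) * U t (x + ω₁ * s) (y + ω₂ * s) := by
          rw [hUunit', one_mul]
      _ = U (s + t) x y * ((U (s + t) x y)ᴴ * U t (x + ω₁ * s) (y + ω₂ * s)) := by
          rw [mul_assoc]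
      _ = U (s + t) x y * (U s x y)ᴴ := by rw [hE]
  -- uniform Lipschitz bound in time
  have hLip : ∀ (x y t t' : ℝ), ‖U t x y - U t' x y‖ ≤ (d * CH) * ‖t - t'‖ := by
    intro x y t t'
    refine Convex.norm_image_sub_le_of_norm_hasDerivWithin_le
      (f := fun u => U u x y)
      (f' := fun u => (-Complex.I) • (Ham u x y * U u x y))
      (fun u _ => (hSchrH u x y).hasDerivWithinAt) (fun u _ => ?_)
      convex_univ (Set.mem_univ t') (Set.mem_univ t)
    rw [norm_smul]
    have hnI : ‖(-Complex.I : ℂ)‖ = 1 := by simp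
    rw [hnI, one_mul]
    calc ‖Ham u x y * U u x y‖ ≤ d * ‖Ham u x y‖ * ‖U u x y‖ := norm_matmul_le _ _
      _ ≤ d * CH * 1 := by
          apply mul_le_mul _ (hUnorm u x y) (norm_nonneg _) (by positivity)
          exact mul_le_mul_of_nonneg_left (hHamnorm u x y) (by positivity)
      _ = d * CH := mul_one _
  -- joint continuity of (t, r) ↦ U t (φ₁ + r) φ₂
  have hVcont : Continuous fun p : ℝ × ℝ => U p.1 (φ₁ + p.2) φ₂ := by
    rw [continuous_iff_continuousAt]
    rintro ⟨t₀, r₀⟩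
    have hr : Continuous fun r : ℝ => U t₀ (φ₁ + r) φ₂ := by
      rw [continuous_iff_continuousAt]
      intro r
      exact ((hD₁ t₀ (φ₁ + r) φ₂).differentiableAt.continuousAt).comp
        ((continuous_const.add continuous_id).continuousAt)
    unfold ContinuousAt
    refine tendsto_iff_dist_tendsto_zero.2 ?_
    apply squeeze_zero (g := fun p : ℝ × ℝ =>
      (d * CH) * dist p.1 t₀ + dist (U t₀ (φ₁ + p.2) φ₂) (U t₀ (φ₁ + r₀) φ₂))
      (fun p => dist_nonneg)
    · intro p
      calc dist (U p.1 (φ₁ + p.2) φ₂) (U t₀ (φ₁ + r₀) φ₂)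
          ≤ dist (U p.1 (φ₁ + p.2) φ₂) (U t₀ (φ₁ + p.2) φ₂)
            + dist (U t₀ (φ₁ + p.2) φ₂) (U t₀ (φ₁ + r₀) φ₂) := dist_triangle _ _ _
        _ ≤ (d * CH) * dist p.1 t₀
            + dist (U t₀ (φ₁ + p.2) φ₂) (U t₀ (φ₁ + r₀) φ₂) := by
            apply add_le_add_left
            rw [dist_eq_norm, dist_eq_norm]
            exact hLip (φ₁ + p.2) φ₂ p.1 t₀
    · have hg : Tendsto (fun p : ℝ × ℝ =>
          (d * CH) * dist p.1 t₀ + dist (U t₀ (φ₁ + p.2) φ₂) (U t₀ (φ₁ + r₀) φ₂))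
          (𝓝 (t₀, r₀)) (𝓝 ((d * CH) * dist t₀ t₀
            + dist (U t₀ (φ₁ + r₀) φ₂) (U t₀ (φ₁ + r₀) φ₂))) := by
        apply Tendsto.add
        · exact (continuous_const.mul (continuous_fst.dist continuous_const)).tendsto _
        · exact ((hr.comp continuous_snd).dist continuous_const).tendsto _
      simpa using hg
  -- the key identity: ω₁ • D₁ + ω₂ • D₂ = -i H(T) U(T) + i U(T) H(0)
  have hkey : ∀ T : ℝ, ω₁ • D₁ T φ₁ φ₂ + ω₂ • D₂ T φ₁ φ₂ =
      (-Complex.I) • (Ham T φ₁ φ₂ * U T φ₁ φ₂) + U T φ₁ φ₂ * (Complex.I • Ham 0 φ₁ φ₂) := by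
    intro T
    set B := D₁ T φ₁ φ₂ with hBdef
    set A : Matrix (Fin d) (Fin d) ℂ :=
      (-Complex.I) • (Ham T φ₁ φ₂ * U T φ₁ φ₂) + U T φ₁ φ₂ * (Complex.I • Ham 0 φ₁ φ₂)
      with hAdef
    set K : ℝ → ℝ → Matrix (Fin d) (Fin d) ℂ := fun σ r =>
      ((-Complex.I) • (Ham (T + σ) (φ₁ + r) φ₂ * U (T + σ) (φ₁ + r) φ₂)) * (U σ (φ₁ + r) φ₂)ᴴ
      + U (T + σ) (φ₁ + r) φ₂ * ((-Complex.I) • (Ham σ (φ₁ + r) φ₂ * U σ (φ₁ + r) φ₂))ᴴ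
      with hKdef
    have hKder : ∀ (σ r : ℝ), HasDerivAt
        (fun σ' => U (T + σ') (φ₁ + r) φ₂ * (U σ' (φ₁ + r) φ₂)ᴴ) (K σ r) σ :=
      fun σ r => hasDerivAt_matmul (hSchr' T (φ₁ + r) φ₂ σ)
        (hasDerivAt_conjTranspose (hSchrH σ (φ₁ + r) φ₂))
    have hKA : K 0 0 = A := by
      rw [hKdef, hAdef]
      simp [add_zero, hU0, Matrix.conjTranspose_smul, Matrix.conjTranspose_mul,
        Matrix.conjTranspose_one, (hHamherm 0 φ₁ φ₂).eq, Complex.star_def]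
    have hVs : Continuous fun p : ℝ × ℝ => U (T + p.1) (φ₁ + p.2) φ₂ := by
      have hg : Continuous fun p : ℝ × ℝ => ((T + p.1, p.2) : ℝ × ℝ) :=
        (continuous_const.add continuous_fst).prodMk continuous_snd
      simpa [Function.comp_def] using hVcont.comp hg
    have hHamc : ∀ a : ℝ, Continuous fun p : ℝ × ℝ => Ham (a + p.1) (φ₁ + p.2) φ₂ := by
      intro a
      simp only [hHamdef]
      refine Continuous.add (Continuous.add continuous_const (hH₁cont.comp ?_))
        (hH₂cont.comp ?_)
      · exact (continuous_const.mul (continuous_const.add continuous_fst)).add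
          (continuous_const.add continuous_snd)
      · exact (continuous_const.mul (continuous_const.add continuous_fst)).add
          continuous_const
    have hHamc0 : Continuous fun p : ℝ × ℝ => Ham p.1 (φ₁ + p.2) φ₂ := by
      simpa using hHamc 0
    have hKcont : Continuous fun p : ℝ × ℝ => K p.1 p.2 := by
      rw [hKdef]
      exact ((((hHamc T).matrix_mul hVs).const_smul (-Complex.I)).matrix_mul
          hVcont.matrix_conjTranspose).add
        (hVs.matrix_mul (((hHamc0.matrix_mul hVcont).const_smul
          (-Complex.I)).matrix_conjTranspose))
    have hgB : HasDerivAt (fun r : ℝ => U T (φ₁ + r) φ₂) B 0 := by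
      have h' : HasDerivAt (fun x => U T x φ₂) B (φ₁ + 0) := by
        rw [add_zero]; exact hD₁ T φ₁ φ₂
      have h'' := HasDerivAt.scomp (𝕜 := ℝ) 0 h' ((hasDerivAt_id (0:ℝ)).const_add φ₁)
      simp only [Function.comp_def, one_smul] at h''
      exact h''
    have hFder : HasFDerivAt
        (fun p : ℝ × ℝ => U (T + p.1) (φ₁ + p.2) φ₂ * (U p.1 (φ₁ + p.2) φ₂)ᴴ)
        ((ContinuousLinearMap.fst ℝ ℝ ℝ).smulRight A
          + (ContinuousLinearMap.snd ℝ ℝ ℝ).smulRight B) ((0:ℝ), (0:ℝ)) := by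
      refine hasFDerivAt_iff_isLittleO_nhds_zero.2 ?_
      rw [Asymptotics.isLittleO_iff]
      intro c hc
      have hKtend : Tendsto (fun p : ℝ × ℝ => K p.1 p.2) (𝓝 (0, 0)) (𝓝 A) := by
        rw [← hKA]; exact hKcont.tendsto _
      have h1 : ∀ᶠ p : ℝ × ℝ in 𝓝 ((0:ℝ), (0:ℝ)), ‖K p.1 p.2 - A‖ < c / 2 := by
        have := Metric.tendsto_nhds.mp hKtend (c / 2) (by linarith)
        simpa [dist_eq_norm] using this
      obtain ⟨δ, hδ0, hδ⟩ := Metric.eventually_nhds_iff_ball.mp h1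
      have h2 : ∀ᶠ r : ℝ in 𝓝 0,
          ‖U T (φ₁ + r) φ₂ - U T (φ₁ + 0) φ₂ - (r - 0) • B‖ ≤ c / 2 * ‖r - 0‖ :=
        Asymptotics.isLittleO_iff.mp (hasDerivAt_iff_isLittleO.mp hgB) (by linarith)
      have h2' : ∀ᶠ p : ℝ × ℝ in 𝓝 ((0:ℝ), (0:ℝ)),
          ‖U T (φ₁ + p.2) φ₂ - U T (φ₁ + 0) φ₂ - (p.2 - 0) • B‖ ≤ c / 2 * ‖p.2 - 0‖ :=
        (continuousAt_snd : Tendsto (Prod.snd : ℝ × ℝ → ℝ) (𝓝 ((0:ℝ),(0:ℝ))) (𝓝 0)).eventually h2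
      filter_upwards [Metric.ball_mem_nhds ((0:ℝ), (0:ℝ)) hδ0, h2'] with p hp hp2
      obtain ⟨σ, r⟩ := p
      simp only [sub_zero, add_zero] at hp2
      rw [Metric.mem_ball, Prod.dist_eq] at hp
      simp only [dist_zero_right, Real.norm_eq_abs] at hp
      have hσδ : |σ| < δ := lt_of_le_of_lt (le_max_left _ _) hp
      have hrδ : |r| < δ := lt_of_le_of_lt (le_max_right _ _) hp
      have hMVT := Convex.norm_image_sub_le_of_norm_hasDerivWithin_le
        (f := fun σ' => U (T + σ') (φ₁ + r) φ₂ * (U σ' (φ₁ + r) φ₂)ᴴ - σ' • A)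
        (f' := fun σ' => K σ' r - A) (s := Metric.ball (0:ℝ) δ) (C := c / 2)
        (fun u _ => by
          have hidA : HasDerivAt (fun σ' : ℝ => σ' • A) A u := by
            have h'' := (hasDerivAt_id u).smul_const A
            simp only [id, one_smul] at h''
            exact h''
          exact (((hKder u r).sub hidA)).hasDerivWithinAt)
        (fun u hu => by
          refine le_of_lt (hδ (u, r) ?_)
          rw [Metric.mem_ball, Prod.dist_eq]
          simp only [dist_zero_right, Real.norm_eq_abs]
          exact max_lt (by simpa [abs_of_nonneg] using Metric.mem_ball.mp hu) hrδ)
        (convex_ball 0 δ)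
        (Metric.mem_ball_self hδ0)
        (by rw [Metric.mem_ball, dist_zero_right, Real.norm_eq_abs]; exact hσδ)
      have hMVT' : ‖(U (T + σ) (φ₁ + r) φ₂ * (U σ (φ₁ + r) φ₂)ᴴ - σ • A)
          - (U T (φ₁ + r) φ₂ - (0:ℝ) • A)‖ ≤ c / 2 * ‖σ - 0‖ := by
        have h := hMVT
        simp only [add_zero, hU0, Matrix.conjTranspose_one, mul_one] at h
        exact h
      simp only [Prod.mk_add_mk, zero_add, add_zero, hU0, Matrix.conjTranspose_one, mul_one,
        ContinuousLinearMap.add_apply, ContinuousLinearMap.smulRight_apply,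
        ContinuousLinearMap.coe_fst', ContinuousLinearMap.coe_snd']
      have hsplit : U (T + σ) (φ₁ + r) φ₂ * (U σ (φ₁ + r) φ₂)ᴴ - U T φ₁ φ₂ - (σ • A + r • B)
          = ((U (T + σ) (φ₁ + r) φ₂ * (U σ (φ₁ + r) φ₂)ᴴ - σ • A)
              - (U T (φ₁ + r) φ₂ - (0:ℝ) • A))
            + (U T (φ₁ + r) φ₂ - U T φ₁ φ₂ - r • B) := by
        simp only [zero_smul, sub_zero]
        abel
      have hLa : ((ContinuousLinearMap.fst ℝ ℝ ℝ).smulRight A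
          + (ContinuousLinearMap.snd ℝ ℝ ℝ).smulRight B) (σ, r) = σ • A + r • B := by simp
      refine le_trans (le_of_eq (congrArg (fun z =>
        ‖U (T + σ) (φ₁ + r) φ₂ * (U σ (φ₁ + r) φ₂)ᴴ - U T φ₁ φ₂ - z‖) hLa)) ?_
      show ‖U (T + σ) (φ₁ + r) φ₂ * (U σ (φ₁ + r) φ₂)ᴴ - U T φ₁ φ₂ - (σ • A + r • B)‖
        ≤ c * ‖((σ, r) : ℝ × ℝ)‖
      rw [hsplit]
      have h1n : ‖σ‖ ≤ ‖((σ, r) : ℝ × ℝ)‖ := norm_fst_le (σ, r)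
      have h2n : ‖r‖ ≤ ‖((σ, r) : ℝ × ℝ)‖ := norm_snd_le (σ, r)
      rw [sub_zero] at hMVT'
      refine le_trans (norm_add_le _ _) ?_
      have hcnn : (0:ℝ) ≤ c / 2 := by linarith
      have e1 := mul_le_mul_of_nonneg_left h1n hcnn
      have e2 := mul_le_mul_of_nonneg_left h2n hcnn
      nlinarith [hp2, hMVT']
    -- chain rule along the direction (ω₂⁻¹, -ω₁ω₂⁻¹) computes D₂
    have hc0 : (fun h : ℝ => ((ω₂⁻¹ * h, -(ω₁ * ω₂⁻¹) * h) : ℝ × ℝ)) 0 = ((0:ℝ), (0:ℝ)) := by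
      norm_num
    have hcd : HasDerivAt (fun h : ℝ => ((ω₂⁻¹ * h, -(ω₁ * ω₂⁻¹) * h) : ℝ × ℝ))
        ((ω₂⁻¹, -(ω₁ * ω₂⁻¹)) : ℝ × ℝ) 0 := by
      apply HasDerivAt.prodMk
      · simpa using HasDerivAt.const_mul ω₂⁻¹ (hasDerivAt_id (0:ℝ))
      · have h := HasDerivAt.const_mul (-(ω₁ * ω₂⁻¹)) (hasDerivAt_id (0:ℝ))
        rwa [mul_one] at h
    have hFder' : HasFDerivAt
        (fun p : ℝ × ℝ => U (T + p.1) (φ₁ + p.2) φ₂ * (U p.1 (φ₁ + p.2) φ₂)ᴴ)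
        ((ContinuousLinearMap.fst ℝ ℝ ℝ).smulRight A
          + (ContinuousLinearMap.snd ℝ ℝ ℝ).smulRight B)
        ((fun h : ℝ => ((ω₂⁻¹ * h, -(ω₁ * ω₂⁻¹) * h) : ℝ × ℝ)) 0) := by
      rw [hc0]; exact hFder
    have hcomp := hFder'.comp_hasDerivAt 0 hcd
    have hfun : (fun h : ℝ => U (T + ω₂⁻¹ * h) (φ₁ + -(ω₁ * ω₂⁻¹) * h) φ₂
          * (U (ω₂⁻¹ * h) (φ₁ + -(ω₁ * ω₂⁻¹) * h) φ₂)ᴴ)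
        = fun h : ℝ => U T φ₁ (φ₂ + h) := by
      funext h
      have hs := hshift (φ₁ + -(ω₁ * ω₂⁻¹) * h) φ₂ (ω₂⁻¹ * h) T
      rw [add_comm T (ω₂⁻¹ * h), ← hs]
      have e1 : φ₁ + -(ω₁ * ω₂⁻¹) * h + ω₁ * (ω₂⁻¹ * h) = φ₁ := by
        field_simp
        ring
      have e2 : φ₂ + ω₂ * (ω₂⁻¹ * h) = φ₂ + h := by
        rw [← mul_assoc, mul_inv_cancel₀ (ne_of_gt hω₂), one_mul]
      rw [e1, e2]
    have hLapp : ((ContinuousLinearMap.fst ℝ ℝ ℝ).smulRight A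
        + (ContinuousLinearMap.snd ℝ ℝ ℝ).smulRight B) ((ω₂⁻¹, -(ω₁ * ω₂⁻¹)) : ℝ × ℝ)
        = ω₂⁻¹ • A + (-(ω₁ * ω₂⁻¹)) • B := by
      simp
    have hD2' : HasDerivAt (fun h : ℝ => U T φ₁ (φ₂ + h))
        (ω₂⁻¹ • A + (-(ω₁ * ω₂⁻¹)) • B) 0 := by
      rw [← hfun, ← hLapp]
      exact hcomp
    have hD2std : HasDerivAt (fun h : ℝ => U T φ₁ (φ₂ + h)) (D₂ T φ₁ φ₂) 0 := by
      have h' : HasDerivAt (fun y => U T φ₁ y) (D₂ T φ₁ φ₂) (φ₂ + 0) := by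
        rw [add_zero]; exact hD₂ T φ₁ φ₂
      have h'' := HasDerivAt.scomp (𝕜 := ℝ) 0 h' ((hasDerivAt_id (0:ℝ)).const_add φ₂)
      simp only [Function.comp_def, one_smul] at h''
      exact h''
    have hD₂eq : D₂ T φ₁ φ₂ = ω₂⁻¹ • A + (-(ω₁ * ω₂⁻¹)) • B := hD2std.unique hD2'
    rw [hD₂eq, smul_add, smul_smul, smul_smul, mul_inv_cancel₀ (ne_of_gt hω₂), one_smul,
      show ω₂ * -(ω₁ * ω₂⁻¹) = -ω₁ by
        rw [mul_neg, mul_comm ω₂ (ω₁ * ω₂⁻¹), mul_assoc, inv_mul_cancel₀ (ne_of_gt hω₂), mul_one],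
      neg_smul]
    abel
  -- the averaged quantity tends to zero
  set Cb : ℝ := d * 1 * (d * CH * 1 + d * 1 * CH) with hCbdef
  have hCb0 : 0 ≤ Cb := by positivity
  have hQbound : ∀ T : ℝ,
      ‖(U T φ₁ φ₂)ᴴ * (ω₁ • D₁ T φ₁ φ₂ + ω₂ • D₂ T φ₁ φ₂)‖ ≤ Cb := by
    intro T
    rw [hkey T]
    calc ‖(U T φ₁ φ₂)ᴴ * ((-Complex.I) • (Ham T φ₁ φ₂ * U T φ₁ φ₂)
            + U T φ₁ φ₂ * (Complex.I • Ham 0 φ₁ φ₂))‖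
        ≤ d * ‖(U T φ₁ φ₂)ᴴ‖ * ‖(-Complex.I) • (Ham T φ₁ φ₂ * U T φ₁ φ₂)
            + U T φ₁ φ₂ * (Complex.I • Ham 0 φ₁ φ₂)‖ := norm_matmul_le _ _
      _ ≤ Cb := by
          rw [hCbdef]
          have hn1 : ‖(-Complex.I) • (Ham T φ₁ φ₂ * U T φ₁ φ₂)‖ ≤ d * CH * 1 := by
            rw [norm_smul]
            simp only [norm_neg, Complex.norm_I, one_mul]
            calc ‖Ham T φ₁ φ₂ * U T φ₁ φ₂‖
                ≤ d * ‖Ham T φ₁ φ₂‖ * ‖U T φ₁ φ₂‖ := norm_matmul_le _ _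
              _ ≤ d * CH * 1 := by
                  apply mul_le_mul _ (hUnorm T φ₁ φ₂) (norm_nonneg _) (by positivity)
                  exact mul_le_mul_of_nonneg_left (hHamnorm T φ₁ φ₂) (by positivity)
          have hn2 : ‖U T φ₁ φ₂ * (Complex.I • Ham 0 φ₁ φ₂)‖ ≤ d * 1 * CH := by
            calc ‖U T φ₁ φ₂ * (Complex.I • Ham 0 φ₁ φ₂)‖
                ≤ d * ‖U T φ₁ φ₂‖ * ‖Complex.I • Ham 0 φ₁ φ₂‖ := norm_matmul_le _ _
              _ ≤ d * 1 * CH := by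
                  apply mul_le_mul _ _ (norm_nonneg _) (by positivity)
                  · exact mul_le_mul_of_nonneg_left (hUnorm T φ₁ φ₂) (by positivity)
                  · rw [norm_smul]
                    simp only [Complex.norm_I, one_mul]
                    exact hHamnorm 0 φ₁ φ₂
          have hs := norm_add_le ((-Complex.I) • (Ham T φ₁ φ₂ * U T φ₁ φ₂))
            (U T φ₁ φ₂ * (Complex.I • Ham 0 φ₁ φ₂))
          have hu := hUHnorm T φ₁ φ₂
          have hd0 : (0:ℝ) ≤ (d:ℝ) := Nat.cast_nonneg d
          have k1 : ‖(-Complex.I) • (Ham T φ₁ φ₂ * U T φ₁ φ₂)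
              + U T φ₁ φ₂ * (Complex.I • Ham 0 φ₁ φ₂)‖ ≤ ↑d * CH * 1 + ↑d * 1 * CH :=
            le_trans hs (add_le_add hn1 hn2)
          exact mul_le_mul (mul_le_mul_of_nonneg_left hu hd0) k1 (norm_nonneg _)
            (by positivity)
  have hQ0 : Tendsto (fun T : ℝ => (Complex.I / (T : ℂ)) •
      ((U T φ₁ φ₂)ᴴ * (ω₁ • D₁ T φ₁ φ₂ + ω₂ • D₂ T φ₁ φ₂))) atTop (𝓝 0) := by
    refine squeeze_zero_norm' (a := fun T : ℝ => Cb * T⁻¹) ?_ ?_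
    · filter_upwards [eventually_ge_atTop (1:ℝ)] with T hT
      have hT0 : (0:ℝ) < T := lt_of_lt_of_le one_pos hT
      rw [norm_smul]
      have hnorm : ‖(Complex.I / (T : ℂ))‖ = T⁻¹ := by
        rw [norm_div, Complex.norm_I, Complex.norm_real]
        rw [Real.norm_eq_abs, abs_of_pos hT0, one_div]
      rw [hnorm, mul_comm (T:ℝ)⁻¹ _]
      exact mul_le_mul_of_nonneg_right (hQbound T) (by positivity)
    · have := tendsto_inv_atTop_zero (𝕜 := ℝ)
      simpa using this.const_mul Cb
  have hsplit : (fun T : ℝ => (Complex.I / (T : ℂ)) •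
        ((U T φ₁ φ₂)ᴴ * (ω₁ • D₁ T φ₁ φ₂ + ω₂ • D₂ T φ₁ φ₂)))
      = fun T : ℝ => ω₁ • ((Complex.I / (T : ℂ)) • ((U T φ₁ φ₂)ᴴ * D₁ T φ₁ φ₂))
        + ω₂ • ((Complex.I / (T : ℂ)) • ((U T φ₁ φ₂)ᴴ * D₂ T φ₁ φ₂)) := by
    funext T
    rw [Matrix.mul_add, Matrix.mul_smul, Matrix.mul_smul, smul_add,
      smul_comm (Complex.I / (T : ℂ)) ω₁, smul_comm (Complex.I / (T : ℂ)) ω₂]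
  rw [hsplit] at hQ0
  have hlim2 : Tendsto (fun T : ℝ =>
      ω₁ • ((Complex.I / (T : ℂ)) • ((U T φ₁ φ₂)ᴴ * D₁ T φ₁ φ₂))
        + ω₂ • ((Complex.I / (T : ℂ)) • ((U T φ₁ φ₂)ᴴ * D₂ T φ₁ φ₂)))
      atTop (𝓝 (ω₁ • P₁ + ω₂ • P₂)) :=
    (hP₁.const_smul ω₁).add (hP₂.const_smul ω₂)
  have hzero : ω₁ • P₁ + ω₂ • P₂ = 0 := tendsto_nhds_unique hlim2 hQ0
  rw [real_coe_smul, real_coe_smul]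
  exact hzero
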